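/- Assume φ : A → ℝ takes only nonnegative values and φ⁻¹({0}) ≠ ∅. Say a configuration a : ℤ^D → A is φ-stationary with average r ∈ ℝ if for every Følner sequence (I_n) in ℤ^D, (1/|I_n|) ∑_{i ∈ I_n} φ(a(i)) converges to r as n → ∞. Then φ is conserved by F if and only if for every configuration a : ℤ^D → A and every r ∈ ℝ, if a is φ-stationary with average r then F(a) is φ-stationary with average r. -/

import Mathlib

open Filter Pointwise


/-- The cellular automaton induced by a local rule `f` on neighbourhood `B`. -/
def induce {X A : Type*} [AddCommGroup X] (B : Finset X) (f : (B → A) → A)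
    (a : X → A) : X → A :=
  fun x => f fun b => a (x + b.1)

/-- `ψ` is conserved by the CA induced by `f` on `B`. -/
def conserved {X A Z : Type*} [AddCommGroup X] [AddCommMonoid Z] (B : Finset X)
    (f : (B → A) → A) (ψ : A → Z) : Prop :=
  (∃ a : A, ψ a = 0) ∧
  (∀ a : X → A, (Function.support fun x => ψ (a x)).Finite →
      (Function.support fun x => ψ (induce B f a x)).Finite) ∧
  (∀ a : X → A, (Function.support fun x => ψ (a x)).Finite →
      ∑ᶠ x, ψ (induce B f a x) = ∑ᶠ x, ψ (a x))

/-- A Følner sequence in `ℤ^D`: a sequence of nonempty finite subsets such that for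
every `x`, `|I_n ∩ (I_n + x)| / |I_n| → 1`. -/
def IsFolner {D : ℕ} (I : ℕ → Finset (Fin D → ℤ)) : Prop :=
  (∀ n, (I n).Nonempty) ∧
  ∀ x : Fin D → ℤ,
    Filter.Tendsto
      (fun n => (((I n) ∩ (I n).image (fun y => y + x)).card : ℝ) / ((I n).card : ℝ))
      Filter.atTop (nhds 1)

/-- `a` is `φ`-stationary with average `r`: along every Følner sequence, the spatial
ergodic averages of `φ` on `a` converge to `r`. -/
def StationaryAvg {D : ℕ} {A : Type*} (φ : A → ℝ) (a : (Fin D → ℤ) → A) (r : ℝ) : Prop :=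
  ∀ I : ℕ → Finset (Fin D → ℤ), IsFolner I →
    Filter.Tendsto (fun n => (∑ i ∈ I n, φ (a i)) / ((I n).card : ℝ))
      Filter.atTop (nhds r)

noncomputable def box (D n : ℕ) : Finset (Fin D → ℤ) := Finset.Icc (0 : Fin D → ℤ) (fun _ => (n : ℤ))

lemma finset_Icc_inter_Icc {D : ℕ} (a b c d : Fin D → ℤ) :
    Finset.Icc a b ∩ Finset.Icc c d = Finset.Icc (a ⊔ c) (b ⊓ d) := by
  ext y
  simp only [Finset.mem_inter, Finset.mem_Icc, sup_le_iff, le_inf_iff]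
  tauto

lemma box_ratio_eq {D : ℕ} (x : Fin D → ℤ) (n : ℕ) (hn : ∀ i, |x i| ≤ (n : ℤ)) :
    (((box D n) ∩ (box D n).image (fun y => y + x)).card : ℝ) / ((box D n).card : ℝ)
      = ∏ i : Fin D, (((n : ℝ) + 1 - ((|x i| : ℤ) : ℝ)) / ((n : ℝ) + 1)) := by
  unfold box
  rw [Finset.image_add_right_Icc, finset_Icc_inter_Icc]
  rw [Pi.card_Icc, Pi.card_Icc]
  push_cast
  rw [← Finset.prod_div_distrib]
  apply Finset.prod_congr rfl
  intro i _
  have h1 : ((0 : Fin D → ℤ) ⊔ (0 + x)) i = (0 : ℤ) ⊔ x i := by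
    simp [Pi.sup_apply]
  have h2 : (((fun _ => (n:ℤ)) : Fin D → ℤ) ⊓ ((fun _ => (n:ℤ)) + x)) i
      = (n:ℤ) ⊓ ((n:ℤ) + x i) := by
    simp [Pi.inf_apply]
  rw [h1, h2, Int.card_Icc, Int.card_Icc]
  have hxi := hn i
  have e1 : ((n:ℤ) ⊓ ((n:ℤ) + x i) + 1 - ((0:ℤ) ⊔ x i)) = (n : ℤ) + 1 - |x i| := by
    rcases le_or_gt 0 (x i) with h | h
    · rw [max_eq_right h, min_eq_left (by omega), abs_of_nonneg h]
    · rw [max_eq_left h.le, min_eq_right (by omega), abs_of_neg h]; ring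
  have e2 : ((n:ℤ) + 1 - (0 : Fin D → ℤ) i) = (n:ℤ) + 1 := by simp
  rw [e1, e2]
  have hnn1 : (0:ℤ) ≤ (n:ℤ)+1-|x i| := by have := abs_nonneg (x i); omega
  have hnn2 : (0:ℤ) ≤ (n:ℤ)+1 := by omega
  have c1 := congrArg (fun z : ℤ => (z : ℝ)) (Int.toNat_of_nonneg hnn1)
  have c2 := congrArg (fun z : ℤ => (z : ℝ)) (Int.toNat_of_nonneg hnn2)
  push_cast at c1 c2 ⊢
  rw [c1, c2]

lemma box_folner (D : ℕ) : IsFolner (box D) := by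
  constructor
  · intro n
    exact ⟨0, by simp [box, Finset.mem_Icc, Pi.le_def]⟩
  intro x
  have hev : ∀ᶠ n in atTop,
      (((box D n) ∩ (box D n).image (fun y => y + x)).card : ℝ) / ((box D n).card : ℝ)
      = ∏ i : Fin D, (((n : ℝ) + 1 - ((|x i| : ℤ) : ℝ)) / ((n : ℝ) + 1)) := by
    obtain ⟨N, hN⟩ : ∃ N : ℕ, ∀ i, |x i| ≤ (N : ℤ) := by
      rcases isEmpty_or_nonempty (Fin D) with h | h
      · exact ⟨0, fun i => h.elim i⟩
      · obtain ⟨m, hm⟩ := Finset.exists_le (Finset.univ.image (fun i => |x i|))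
        exact ⟨m.toNat, fun i => le_trans (hm _ (Finset.mem_image_of_mem _ (Finset.mem_univ i)))
          (Int.self_le_toNat m)⟩
    filter_upwards [eventually_ge_atTop N] with n hn
    exact box_ratio_eq x n (fun i => le_trans (hN i) (by exact_mod_cast hn))
  rw [tendsto_congr' hev]
  have : Filter.Tendsto
      (fun n : ℕ => ∏ i : Fin D, (((n : ℝ) + 1 - ((|x i| : ℤ) : ℝ)) / ((n : ℝ) + 1)))
      atTop (nhds (∏ i : Fin D, (1:ℝ))) := by
    apply tendsto_finset_prod
    intro i _
    have h1 : Filter.Tendsto (fun n : ℕ => ((n : ℝ) + 1)) atTop atTop :=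
      tendsto_atTop_add_const_right _ _ tendsto_natCast_atTop_atTop
    have h2 : Filter.Tendsto (fun n : ℕ => (((|x i| : ℤ) : ℝ)) / ((n:ℝ)+1)) atTop (nhds 0) :=
      Tendsto.div_atTop tendsto_const_nhds h1
    have h3 := (tendsto_const_nhds (x := (1:ℝ)) (f := atTop (α := ℕ))).sub h2
    rw [sub_zero] at h3
    apply h3.congr
    intro n
    have hne : ((n:ℝ)+1) ≠ 0 := by positivity
    field_simp
  simpa using this

lemma translate_avg_tendsto {D : ℕ} {I : ℕ → Finset (Fin D → ℤ)} (hI : IsFolner I)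
    (g : (Fin D → ℤ) → ℝ) (M : ℝ) (hg0 : ∀ x, 0 ≤ g x) (hgM : ∀ x, g x ≤ M) (t : Fin D → ℤ) :
    Filter.Tendsto
      (fun n => ((∑ i ∈ I n, g i) - ∑ i ∈ I n, g (i + t)) / ((I n).card : ℝ))
      atTop (nhds 0) := by
  have hM : 0 ≤ M := le_trans (hg0 0) (hgM 0)
  have hbt : Filter.Tendsto
      (fun n => M * (1 - (((I n) ∩ (I n).image (fun y => y + t)).card : ℝ) / ((I n).card : ℝ)))
      atTop (nhds 0) := by
    have := (tendsto_const_nhds (x := (1:ℝ)) (f := atTop (α := ℕ))).sub (hI.2 t)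
    rw [sub_self] at this
    simpa using this.const_mul M
  apply squeeze_zero_norm _ hbt
  intro n
  have hcpos : (0:ℝ) < ((I n).card : ℝ) := by
    exact_mod_cast Finset.card_pos.mpr (hI.1 n)
  set J := (I n).image (fun y => y + t) with hJ
  have hinj : Function.Injective (fun y : Fin D → ℤ => y + t) := fun a b h => by
    simpa using congrArg (fun z => z - t) h
  have hsum2 : ∑ i ∈ I n, g (i + t) = ∑ j ∈ J, g j := by
    rw [hJ, Finset.sum_image (fun a _ b _ h => hinj h)]
  have hcard : J.card = (I n).card := Finset.card_image_of_injective _ hinj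
  have hsplit1 : ∑ i ∈ I n, g i = ∑ i ∈ I n ∩ J, g i + ∑ i ∈ I n \ J, g i := by
    rw [Finset.sum_inter_add_sum_sdiff]
  have hsplit2 : ∑ j ∈ J, g j = ∑ i ∈ J ∩ I n, g i + ∑ i ∈ J \ I n, g i := by
    rw [Finset.sum_inter_add_sum_sdiff]
  have hc1 : (I n \ J).card + (I n ∩ J).card = (I n).card :=
    Finset.card_sdiff_add_card_inter _ _
  have hc2 : (J \ I n).card + (I n ∩ J).card = (I n).card := by
    rw [Finset.inter_comm (I n) J]
    rw [Finset.card_sdiff_add_card_inter _ _, hcard]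
  have hb1 : ∑ i ∈ I n \ J, g i ≤ ((I n \ J).card : ℝ) * M := by
    have := Finset.sum_le_card_nsmul (I n \ J) g M (fun x _ => hgM x)
    simpa [nsmul_eq_mul] using this
  have hb2 : ∑ i ∈ J \ I n, g i ≤ ((J \ I n).card : ℝ) * M := by
    have := Finset.sum_le_card_nsmul (J \ I n) g M (fun x _ => hgM x)
    simpa [nsmul_eq_mul] using this
  have hb1' : 0 ≤ ∑ i ∈ I n \ J, g i := Finset.sum_nonneg fun x _ => hg0 x
  have hb2' : 0 ≤ ∑ i ∈ J \ I n, g i := Finset.sum_nonneg fun x _ => hg0 x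
  have hdiff : ∑ i ∈ I n, g i - ∑ i ∈ I n, g (i + t)
      = ∑ i ∈ I n \ J, g i - ∑ i ∈ J \ I n, g i := by
    rw [hsum2, hsplit1, hsplit2, Finset.inter_comm J (I n)]
    ring
  have hd : ((I n \ J).card : ℝ) = ((I n).card : ℝ) - ((I n ∩ J).card : ℝ) := by
    have : ((I n \ J).card : ℝ) + ((I n ∩ J).card : ℝ) = ((I n).card : ℝ) := by
      exact_mod_cast congrArg (Nat.cast : ℕ → ℝ) hc1
    linarith
  have hd2 : ((J \ I n).card : ℝ) = ((I n).card : ℝ) - ((I n ∩ J).card : ℝ) := by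
    have : ((J \ I n).card : ℝ) + ((I n ∩ J).card : ℝ) = ((I n).card : ℝ) := by
      exact_mod_cast congrArg (Nat.cast : ℕ → ℝ) hc2
    linarith
  have habs : |∑ i ∈ I n, g i - ∑ i ∈ I n, g (i + t)|
      ≤ M * (((I n).card : ℝ) - ((I n ∩ J).card : ℝ)) := by
    rw [hdiff]
    rw [hd] at hb1
    rw [hd2] at hb2
    apply abs_le.mpr
    constructor <;> nlinarith
  rw [Real.norm_eq_abs, abs_div, abs_of_pos hcpos, div_le_iff₀ hcpos]
  calc |∑ i ∈ I n, g i - ∑ i ∈ I n, g (i + t)|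
      ≤ M * (((I n).card : ℝ) - ((I n ∩ J).card : ℝ)) := habs
    _ = M * (1 - ((I n ∩ J).card : ℝ) / ((I n).card : ℝ)) * ((I n).card : ℝ) := by
        field_simp

lemma periodic_sum_shift {D : ℕ} (L : ℕ) (hL : 0 < L) (g : (Fin D → ℤ) → ℝ)
    (hper : ∀ x t : Fin D → ℤ, g (x + (L:ℤ) • t) = g x) (x : Fin D → ℤ) :
    ∑ t ∈ Finset.Icc (0 : Fin D → ℤ) (fun _ => (L:ℤ)-1), g (x + t)
      = ∑ t ∈ Finset.Icc (0 : Fin D → ℤ) (fun _ => (L:ℤ)-1), g t := by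
  have hLne : (L:ℤ) ≠ 0 := by exact_mod_cast hL.ne'
  have hLpos : (0:ℤ) < (L:ℤ) := by exact_mod_cast hL
  have hmod : ∀ v : Fin D → ℤ, g v = g (fun i => v i % (L:ℤ)) := by
    intro v
    have hv : v = (fun i => v i % (L:ℤ)) + (L:ℤ) • (fun i => v i / (L:ℤ)) := by
      funext i
      simp only [Pi.add_apply, Pi.smul_apply, smul_eq_mul]
      exact (Int.emod_add_mul_ediv _ _).symm
    conv_lhs => rw [hv]
    exact hper _ _
  have hmem : ∀ v : Fin D → ℤ,
      (fun i => v i % (L:ℤ)) ∈ Finset.Icc (0 : Fin D → ℤ) (fun _ => (L:ℤ)-1) := by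
    intro v
    rw [Finset.mem_Icc]
    constructor <;> intro i
    · show (0:ℤ) ≤ v i % (L:ℤ)
      exact Int.emod_nonneg _ hLne
    · show v i % (L:ℤ) ≤ (L:ℤ) - 1
      have := Int.emod_lt_of_pos (v i) hLpos; omega
  have key1 : ∀ a b : ℤ, (a % (L:ℤ) - b) % (L:ℤ) = (a - b) % (L:ℤ) := by
    intro a b
    exact Int.ModEq.sub_right b (Int.emod_emod_of_dvd a dvd_rfl)
  have key2 : ∀ a b : ℤ, (a + b % (L:ℤ)) % (L:ℤ) = (a + b) % (L:ℤ) := by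
    intro a b
    exact Int.ModEq.add_left a (Int.emod_emod_of_dvd b dvd_rfl)
  have hsmall : ∀ t : Fin D → ℤ, t ∈ Finset.Icc (0 : Fin D → ℤ) (fun _ => (L:ℤ)-1) →
      ∀ i, t i % (L:ℤ) = t i := by
    intro t ht i
    rw [Finset.mem_Icc] at ht
    have h1 : (0:ℤ) ≤ t i := by have := ht.1 i; simpa using this
    have h2 : t i ≤ (L:ℤ)-1 := by have := ht.2 i; simpa using this
    exact Int.emod_eq_of_lt h1 (by omega)
  apply Finset.sum_nbij' (i := fun t => (fun i => (x i + t i) % (L:ℤ)))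
    (j := fun t => (fun i => (t i - x i) % (L:ℤ)))
  · intro t _; exact hmem _
  · intro t _; exact hmem _
  · intro t ht
    funext i
    show ((x i + t i) % (L:ℤ) - x i) % (L:ℤ) = t i
    rw [key1, add_sub_cancel_left, hsmall t ht i]
  · intro t ht
    funext i
    show (x i + (t i - x i) % (L:ℤ)) % (L:ℤ) = t i
    rw [key2, show x i + (t i - x i) = t i by ring, hsmall t ht i]
  · intro t _
    rw [hmod (x + t)]
    rfl

lemma box_card {D : ℕ} (L : ℕ) :
    ((Finset.Icc (0 : Fin D → ℤ) (fun _ => (L:ℤ)-1)).card : ℝ) = (L:ℝ)^D := by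
  rw [Pi.card_Icc]
  push_cast
  rw [Finset.prod_congr rfl (fun i _ => ?_), Finset.prod_const, Finset.card_univ,
    Fintype.card_fin]
  rw [Int.card_Icc]
  simp

lemma periodic_avg {D : ℕ} (L : ℕ) (hL : 0 < L) (g : (Fin D → ℤ) → ℝ) (M : ℝ)
    (hg0 : ∀ x, 0 ≤ g x) (hgM : ∀ x, g x ≤ M)
    (hper : ∀ x t : Fin D → ℤ, g (x + (L:ℤ) • t) = g x)
    {I : ℕ → Finset (Fin D → ℤ)} (hI : IsFolner I) :
    Filter.Tendsto (fun n => (∑ i ∈ I n, g i) / ((I n).card : ℝ)) atTop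
      (nhds ((∑ t ∈ Finset.Icc (0 : Fin D → ℤ) (fun _ => (L:ℤ)-1), g t) / (L:ℝ)^D)) := by
  set T := Finset.Icc (0 : Fin D → ℤ) (fun _ => (L:ℤ)-1) with hT
  set m := (∑ t ∈ T, g t) / (L:ℝ)^D with hm
  have hLD : ((L:ℝ))^D ≠ 0 := by positivity
  have hdt : Filter.Tendsto
      (fun n => ∑ t ∈ T, ((∑ i ∈ I n, g i) - ∑ i ∈ I n, g (i + t)) / ((I n).card : ℝ))
      atTop (nhds 0) := by
    have := tendsto_finset_sum T
      (fun t _ => translate_avg_tendsto hI g M hg0 hgM t)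
    simpa using this
  have hid : ∀ n, (∑ i ∈ I n, g i) / ((I n).card : ℝ)
      = m + (1/(L:ℝ)^D) * ∑ t ∈ T, ((∑ i ∈ I n, g i) - ∑ i ∈ I n, g (i + t)) / ((I n).card : ℝ) := by
    intro n
    have hcne : ((I n).card : ℝ) ≠ 0 := by
      have : (0:ℝ) < ((I n).card : ℝ) := by exact_mod_cast Finset.card_pos.mpr (hI.1 n)
      exact this.ne'
    have hTcard : (T.card : ℝ) = (L:ℝ)^D := box_card L
    have hswap : ∑ t ∈ T, ∑ i ∈ I n, g (i + t) = ((I n).card : ℝ) * ∑ t ∈ T, g t := by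
      rw [Finset.sum_comm]
      rw [Finset.sum_congr rfl (fun i _ => periodic_sum_shift L hL g hper i)]
      rw [Finset.sum_const, nsmul_eq_mul]
    have hsum : ∑ t ∈ T, ((∑ i ∈ I n, g i) - ∑ i ∈ I n, g (i + t)) / ((I n).card : ℝ)
        = ((L:ℝ)^D * (∑ i ∈ I n, g i) - ((I n).card : ℝ) * ∑ t ∈ T, g t) / ((I n).card : ℝ) := by
      rw [← Finset.sum_div, Finset.sum_sub_distrib, hswap, Finset.sum_const, nsmul_eq_mul, hTcard]
    rw [hsum, hm]
    field_simp
    ring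
  rw [tendsto_congr hid]
  have := hdt.const_mul (1/(L:ℝ)^D)
  have h2 := (tendsto_const_nhds (x := m) (f := atTop (α := ℕ))).add this
  simpa using h2

section Main

variable {A : Type*} [Fintype A] [Nonempty A] {D : ℕ}

/-- the vacuum rule value is vacuum, given conservation -/
lemma vacuum_rule (hD : 1 ≤ D) (B : Finset (Fin D → ℤ)) (f : (B → A) → A) (φ : A → ℝ)
    (hcons : conserved B f φ) {q : A} (hq : φ q = 0) :
    φ (f (fun _ => q)) = 0 := by
  haveI : Nonempty (Fin D) := ⟨⟨0, hD⟩⟩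
  haveI : Infinite (Fin D → ℤ) := Pi.infinite_of_right
  set c : (Fin D → ℤ) → A := fun _ => q with hc
  have hsupc : (Function.support fun x => φ (c x)).Finite := by
    have : (Function.support fun x : Fin D → ℤ => φ (c x)) = ∅ := by
      ext x; simp [hc, hq]
    rw [this]; exact Set.finite_empty
  have hfin := hcons.2.1 c hsupc
  by_contra h
  have hconst : ∀ x : Fin D → ℤ, induce B f c x = f (fun _ => q) := by
    intro x; rfl
  have : (Function.support fun x => φ (induce B f c x)) = Set.univ := by
    ext x; simp [hconst, h]
  rw [this] at hfin
  exact Set.infinite_univ hfin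

lemma forward_dir (hD : 1 ≤ D) (B : Finset (Fin D → ℤ)) (hB0 : (0 : Fin D → ℤ) ∈ B)
    (hBsym : ∀ b : Fin D → ℤ, b ∈ B ↔ -b ∈ B)
    (f : (B → A) → A) (φ : A → ℝ)
    (hpos : ∀ a : A, 0 ≤ φ a) (hvac : ∃ a : A, φ a = 0)
    (hcons : conserved B f φ) (a : (Fin D → ℤ) → A) (r : ℝ)
    (hstat : StationaryAvg φ a r) : StationaryAvg φ (induce B f a) r := by
  classical
  obtain ⟨q, hq⟩ := hvac
  set M := Finset.univ.sup' Finset.univ_nonempty φ with hM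
  have hMle : ∀ b : A, φ b ≤ M := fun b => Finset.le_sup' φ (Finset.mem_univ b)
  have hM0 : 0 ≤ M := le_trans (hpos q) (hMle q)
  have hvr : φ (f (fun _ => q)) = 0 := vacuum_rule hD B f φ hcons hq
  intro I hI
  -- key cardinality bound and sum estimate per n
  have key : ∀ n, |(∑ i ∈ I n, φ (induce B f a i)) - ∑ i ∈ I n, φ (a i)|
      ≤ M * (((I n + B + B) \ I n).card : ℝ) := by
    intro n
    set an : (Fin D → ℤ) → A := fun x => if x ∈ I n + B then a x else q with han
    have hsub1 : I n ⊆ I n + B := by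
      intro x hx
      have := Finset.add_mem_add hx hB0
      simpa using this
    have hsub2 : I n + B ⊆ I n + B + B := by
      intro x hx
      have := Finset.add_mem_add hx hB0
      simpa using this
    have hsupan : (Function.support fun x => φ (an x)) ⊆ ↑(I n + B) := by
      intro x hx
      by_contra hmem
      apply hx
      have hni : x ∉ I n + B := fun h => hmem (Finset.mem_coe.mpr h)
      show φ (an x) = 0
      simp only [han]
      rw [if_neg hni]
      exact hq
    have hsupanf : (Function.support fun x => φ (an x)).Finite :=
      Set.Finite.subset (Finset.finite_toSet _) hsupan
    have heqI : ∀ x ∈ I n, induce B f an x = induce B f a x := by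
      intro x hx
      unfold induce
      congr 1
      funext b
      have : x + b.1 ∈ I n + B := Finset.add_mem_add hx b.2
      simp [han, this]
    have houtK : ∀ x, x ∉ I n + B + B → induce B f an x = f (fun _ => q) := by
      intro x hx
      unfold induce
      congr 1
      funext b
      have : x + b.1 ∉ I n + B := by
        intro hmem
        apply hx
        have h2 : (x + b.1) + (-b.1) ∈ I n + B + B :=
          Finset.add_mem_add hmem ((hBsym b.1).mp b.2)
        simpa using h2
      simp [han, this]
    have hsupF : (Function.support fun x => φ (induce B f an x)) ⊆ ↑(I n + B + B) := by
      intro x hx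
      by_contra hmem
      apply hx
      have hni : x ∉ I n + B + B := fun h => hmem (Finset.mem_coe.mpr h)
      show φ (induce B f an x) = 0
      rw [houtK x hni]
      exact hvr
    have hsum := hcons.2.2 an hsupanf
    rw [finsum_eq_finset_sum_of_support_subset _ hsupF,
      finsum_eq_finset_sum_of_support_subset _ hsupan] at hsum
    -- split sums
    rw [← Finset.sum_sdiff (hsub1.trans hsub2) (f := fun x => φ (induce B f an x)),
      ← Finset.sum_sdiff hsub1 (f := fun x => φ (an x))] at hsum
    have e1 : ∑ x ∈ I n, φ (induce B f an x) = ∑ x ∈ I n, φ (induce B f a x) :=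
      Finset.sum_congr rfl (fun x hx => by rw [heqI x hx])
    have e2 : ∑ x ∈ I n, φ (an x) = ∑ x ∈ I n, φ (a x) :=
      Finset.sum_congr rfl (fun x hx => by simp [han, hsub1 hx])
    rw [e1, e2] at hsum
    -- bounds on boundary sums
    have hb1 : 0 ≤ ∑ x ∈ (I n + B) \ I n, φ (an x) := Finset.sum_nonneg fun x _ => hpos _
    have hb2 : 0 ≤ ∑ x ∈ (I n + B + B) \ I n, φ (induce B f an x) :=
      Finset.sum_nonneg fun x _ => hpos _
    have hb1' : ∑ x ∈ (I n + B) \ I n, φ (an x) ≤ M * (((I n + B + B) \ I n).card : ℝ) := by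
      calc ∑ x ∈ (I n + B) \ I n, φ (an x)
          ≤ ∑ x ∈ (I n + B + B) \ I n, φ (an x) :=
            Finset.sum_le_sum_of_subset_of_nonneg
              (Finset.sdiff_subset_sdiff hsub2 le_rfl) (fun x _ _ => hpos _)
        _ ≤ (((I n + B + B) \ I n).card : ℝ) * M := by
            have := Finset.sum_le_card_nsmul ((I n + B + B) \ I n) (fun x => φ (an x)) M
              (fun x _ => hMle _)
            simpa [nsmul_eq_mul] using this
        _ = M * (((I n + B + B) \ I n).card : ℝ) := mul_comm _ _
    have hb2' : ∑ x ∈ (I n + B + B) \ I n, φ (induce B f an x)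
        ≤ M * (((I n + B + B) \ I n).card : ℝ) := by
      have := Finset.sum_le_card_nsmul ((I n + B + B) \ I n) (fun x => φ (induce B f an x)) M
        (fun x _ => hMle _)
      calc ∑ x ∈ (I n + B + B) \ I n, φ (induce B f an x)
          ≤ (((I n + B + B) \ I n).card : ℝ) * M := by simpa [nsmul_eq_mul] using this
        _ = M * _ := mul_comm _ _
    apply abs_le.mpr
    constructor <;> nlinarith
  -- now conclude via squeeze
  have hboundt : Filter.Tendsto
      (fun n => M * ((((I n + B + B) \ I n).card : ℝ) / ((I n).card : ℝ))) atTop (nhds 0) := by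
    have hcard : ∀ n, ((((I n + B + B) \ I n).card : ℝ) / ((I n).card : ℝ))
        ≤ ∑ t ∈ B + B, (1 - (((I n) ∩ (I n).image (fun y => y + t)).card : ℝ) / ((I n).card : ℝ)) := by
      intro n
      have hcpos : (0:ℝ) < ((I n).card : ℝ) := by
        exact_mod_cast Finset.card_pos.mpr (hI.1 n)
      have hsubU : (I n + B + B) \ I n ⊆ (B + B).biUnion
          (fun t => (I n).image (fun y => y + t) \ I n) := by
        intro x hx
        rw [Finset.mem_sdiff] at hx
        obtain ⟨hx1, hx2⟩ := hx
        rw [Finset.mem_biUnion]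
        rw [add_assoc] at hx1
        rw [Finset.mem_add] at hx1
        obtain ⟨i, hi, t, ht, rfl⟩ := hx1
        exact ⟨t, ht, Finset.mem_sdiff.mpr ⟨Finset.mem_image_of_mem _ hi, hx2⟩⟩
      have h1 : (((I n + B + B) \ I n).card : ℝ)
          ≤ ∑ t ∈ B + B, (((I n).image (fun y => y + t) \ I n).card : ℝ) := by
        have := (Finset.card_le_card hsubU).trans (Finset.card_biUnion_le)
        exact_mod_cast this
      have h2 : ∀ t, (((I n).image (fun y => y + t) \ I n).card : ℝ)
          = ((I n).card : ℝ) - (((I n) ∩ (I n).image (fun y => y + t)).card : ℝ) := by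
        intro t
        have hinj : Function.Injective (fun y : Fin D → ℤ => y + t) := fun u v h => by
          simpa using congrArg (fun z => z - t) h
        have hcardim : ((I n).image (fun y => y + t)).card = (I n).card :=
          Finset.card_image_of_injective _ hinj
        have := Finset.card_sdiff_add_card_inter ((I n).image (fun y => y + t)) (I n)
        rw [Finset.inter_comm] at this
        rw [hcardim] at this
        have : (((I n).image (fun y => y + t) \ I n).card : ℝ)
            + (((I n) ∩ (I n).image (fun y => y + t)).card : ℝ) = ((I n).card : ℝ) := by
          exact_mod_cast congrArg (Nat.cast : ℕ → ℝ) this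
        linarith
      calc (((I n + B + B) \ I n).card : ℝ) / ((I n).card : ℝ)
          ≤ (∑ t ∈ B + B, (((I n).image (fun y => y + t) \ I n).card : ℝ)) / ((I n).card : ℝ) :=
            div_le_div_of_nonneg_right h1 hcpos.le
        _ = ∑ t ∈ B + B, (1 - (((I n) ∩ (I n).image (fun y => y + t)).card : ℝ) / ((I n).card : ℝ)) := by
            rw [Finset.sum_div]
            apply Finset.sum_congr rfl
            intro t _
            rw [h2 t]
            have hcne : ((I n).card : ℝ) ≠ 0 := hcpos.ne'
            field_simp
    have hg : Filter.Tendsto (fun n => M * ∑ t ∈ B + B,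
        (1 - (((I n) ∩ (I n).image (fun y => y + t)).card : ℝ) / ((I n).card : ℝ)))
        atTop (nhds 0) := by
      have hsum0 : Filter.Tendsto (fun n => ∑ t ∈ B + B,
          (1 - (((I n) ∩ (I n).image (fun y => y + t)).card : ℝ) / ((I n).card : ℝ)))
          atTop (nhds 0) := by
        have := tendsto_finset_sum (B + B) (fun t _ =>
          (tendsto_const_nhds (x := (1:ℝ)) (f := atTop (α := ℕ))).sub (hI.2 t))
        simpa using this
      simpa using hsum0.const_mul M
    apply squeeze_zero (fun n => ?_) (fun n => ?_) hg
    · exact mul_nonneg hM0 (div_nonneg (Nat.cast_nonneg _) (Nat.cast_nonneg _))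
    · exact mul_le_mul_of_nonneg_left (hcard n) hM0
  have hdiff0 : Filter.Tendsto
      (fun n => ((∑ i ∈ I n, φ (induce B f a i)) - ∑ i ∈ I n, φ (a i)) / ((I n).card : ℝ))
      atTop (nhds 0) := by
    apply squeeze_zero_norm (fun n => ?_) hboundt
    have hcpos : (0:ℝ) < ((I n).card : ℝ) := by
      exact_mod_cast Finset.card_pos.mpr (hI.1 n)
    rw [Real.norm_eq_abs, abs_div, abs_of_pos hcpos, ← mul_div_assoc]
    refine div_le_div_of_nonneg_right ?_ hcpos.le
    exact key n
  have hfinal := (hstat I hI).add hdiff0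
  rw [add_zero] at hfinal
  apply hfinal.congr
  intro n
  rw [← add_div]
  congr 1
  ring

lemma bound_finset {D' : ℕ} (S : Finset (Fin D' → ℤ)) :
    ∃ N : ℕ, ∀ s ∈ S, ∀ i, |s i| ≤ (N:ℤ) := by
  refine ⟨S.sup (fun s => Finset.univ.sup fun i => (s i).natAbs), ?_⟩
  intro s hs i
  have h1 : (s i).natAbs ≤ S.sup (fun s => Finset.univ.sup fun i => (s i).natAbs) :=
    le_trans (Finset.le_sup (f := fun i => (s i).natAbs) (Finset.mem_univ i))
      (Finset.le_sup (f := fun s => Finset.univ.sup fun i => (s i).natAbs) hs)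
  rw [Int.abs_eq_natAbs]
  exact_mod_cast h1

lemma perz_periodic {E : Type*} (L : ℕ) (a0 : (Fin D → ℤ) → E)
    (y t : Fin D → ℤ) :
    a0 (fun i => (y + (L:ℤ) • t) i % (L:ℤ)) = a0 (fun i => y i % (L:ℤ)) := by
  congr 1
  funext i
  simp only [Pi.add_apply, Pi.smul_apply, smul_eq_mul]
  simp [Int.add_mul_emod_self_left]

lemma induce_periodic {E : Type*} (L : ℕ) (B : Finset (Fin D → ℤ))
    (f : (B → E) → E) (c : (Fin D → ℤ) → E)
    (hcper : ∀ y t, c (y + (L:ℤ) • t) = c y) (x t : Fin D → ℤ) :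
    induce B f c (x + (L:ℤ) • t) = induce B f c x := by
  unfold induce
  congr 1
  funext b
  rw [show x + (L:ℤ) • t + b.1 = (x + b.1) + (L:ℤ) • t by abel]
  exact hcper _ _

lemma induce_perz {E : Type*} (L NB : ℕ) (hL : 0 < L) (B : Finset (Fin D → ℤ))
    (hNB : ∀ b ∈ B, ∀ i, |b i| ≤ (NB:ℤ)) (f : (B → E) → E) (a0 : (Fin D → ℤ) → E)
    (x : Fin D → ℤ)
    (hdeep : ∀ i, (NB:ℤ) ≤ x i % (L:ℤ) ∧ x i % (L:ℤ) ≤ (L:ℤ)-1-(NB:ℤ)) :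
    induce B f (fun y => a0 (fun i => y i % (L:ℤ))) x
      = induce B f a0 (fun i => x i % (L:ℤ)) := by
  unfold induce
  congr 1
  funext b
  show a0 (fun i => (x + b.1) i % (L:ℤ)) = a0 ((fun i => x i % (L:ℤ)) + b.1)
  congr 1
  funext i
  show (x i + b.1 i) % (L:ℤ) = x i % (L:ℤ) + b.1 i
  have hb := hNB b.1 b.2 i
  obtain ⟨hb1, hb2⟩ := abs_le.mp hb
  have h := Int.ModEq.add_right (b.1 i) (Int.emod_emod_of_dvd (x i) (dvd_refl (L:ℤ)))
  rw [← h]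
  have hd := hdeep i
  exact Int.emod_eq_of_lt (by omega) (by omega)

lemma emod_cases (L w : ℤ) (hL : 0 < L) (hw : -L < w) (hw2 : w < 2*L) :
    w % L = w ∨ w % L = w - L ∨ w % L = w + L := by
  have h0 : 0 ≤ w % L := Int.emod_nonneg _ hL.ne'
  have h1 : w % L < L := Int.emod_lt_of_pos _ hL
  have hd : w % L = w - L * (w / L) := Int.emod_def _ _
  set k := w / L with hk
  have hcases : k = 0 ∨ k = 1 ∨ k = -1 := by
    by_contra h
    push_neg at h
    obtain ⟨h0', h1', h2'⟩ := h
    rcases lt_or_gt_of_ne h0' with hkk | hkk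
    · have hk2 : k ≤ -2 := by omega
      have : L * k ≤ L * (-2) := by
        apply mul_le_mul_of_nonneg_left hk2 hL.le
      omega
    · have hk2 : 2 ≤ k := by omega
      have : L * 2 ≤ L * k := by
        apply mul_le_mul_of_nonneg_left hk2 hL.le
      omega
  rcases hcases with h | h | h
  · left; rw [hd, h]; ring
  · right; left; rw [hd, h]; ring
  · right; right; rw [hd, h]; ring

lemma rule_vacuum (hD : 1 ≤ D) (B : Finset (Fin D → ℤ)) (hB0 : (0 : Fin D → ℤ) ∈ B)
    (f : (B → A) → A) (φ : A → ℝ)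
    (hpos : ∀ a : A, 0 ≤ φ a) (hvac : ∃ a : A, φ a = 0)
    (hRHS : ∀ (a : (Fin D → ℤ) → A) (r : ℝ),
      StationaryAvg φ a r → StationaryAvg φ (induce B f a) r)
    (p : B → A) (hp : ∀ b, φ (p b) = 0) : φ (f p) = 0 := by
  classical
  obtain ⟨q, hq⟩ := hvac
  obtain ⟨NB, hNB⟩ := bound_finset B
  set M := Finset.univ.sup' Finset.univ_nonempty φ with hM
  have hMle : ∀ b : A, φ b ≤ M := fun b => Finset.le_sup' φ (Finset.mem_univ b)
  set L : ℕ := 3 * NB + 1 with hLdef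
  have hL : 0 < L := by omega
  set v : Fin D → ℤ := fun _ => (2 * NB : ℤ) with hv
  set a0 : (Fin D → ℤ) → A := fun z => if h : z - v ∈ B then p ⟨z - v, h⟩ else q with ha0
  set c : (Fin D → ℤ) → A := fun y => a0 (fun i => y i % (L:ℤ)) with hc
  have ha0vac : ∀ z, φ (a0 z) = 0 := by
    intro z
    simp only [ha0]
    split
    · exact hp _
    · exact hq
  have hcvac : ∀ y, φ (c y) = 0 := fun y => ha0vac _
  have hstatc : StationaryAvg φ c 0 := by
    intro I hI
    have : ∀ n, (∑ i ∈ I n, φ (c i)) / ((I n).card : ℝ) = 0 := by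
      intro n
      rw [Finset.sum_eq_zero (fun i _ => hcvac i), zero_div]
    rw [tendsto_congr this]
    exact tendsto_const_nhds
  have hFstat := hRHS c 0 hstatc (box D) (box_folner D)
  -- g = φ ∘ F c is periodic
  set g : (Fin D → ℤ) → ℝ := fun y => φ (induce B f c y) with hg
  have hcper : ∀ y t, c (y + (L:ℤ) • t) = c y := fun y t => perz_periodic L a0 y t
  have hgper : ∀ x t, g (x + (L:ℤ) • t) = g x := by
    intro x t
    simp only [hg]
    rw [induce_periodic L B f c hcper x t]
  have hper_avg := periodic_avg L hL g M (fun x => hpos _) (fun x => hMle _) hgper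
    (box_folner D)
  have huniq := tendsto_nhds_unique hFstat hper_avg
  -- mean over fundamental domain is 0, nonneg terms
  set T := Finset.Icc (0 : Fin D → ℤ) (fun _ => (L:ℤ)-1) with hT
  have hsum0 : ∑ t ∈ T, g t = 0 := by
    have hLD : ((L:ℝ))^D ≠ 0 := by positivity
    exact (div_eq_zero_iff.mp huniq.symm).resolve_right hLD
  have hall0 : ∀ t ∈ T, g t = 0 :=
    (Finset.sum_eq_zero_iff_of_nonneg (fun t _ => hpos _)).mp hsum0
  -- evaluate at v
  have hvT : v ∈ T := by
    rw [hT, Finset.mem_Icc]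
    constructor <;> rw [Pi.le_def] <;> intro i
    · simp only [hv, Pi.zero_apply]
      positivity
    · simp only [hv, hLdef]
      push_cast
      omega
  have hvdeep : ∀ i, (NB:ℤ) ≤ v i % (L:ℤ) ∧ v i % (L:ℤ) ≤ (L:ℤ)-1-(NB:ℤ) := by
    intro i
    have : v i % (L:ℤ) = v i := Int.emod_eq_of_lt (by simp only [hv]; positivity) (by
      simp only [hv, hLdef]; push_cast; omega)
    rw [this]
    simp only [hv, hLdef]
    push_cast
    omega
  have hrhov : (fun i => v i % (L:ℤ)) = v := by
    funext i
    exact Int.emod_eq_of_lt (by simp only [hv]; positivity) (by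
      simp only [hv, hLdef]; push_cast; omega)
  have hgv : g v = φ (f p) := by
    simp only [hg]
    rw [show induce B f c v = induce B f a0 (fun i => v i % (L:ℤ)) from
      induce_perz L NB hL B hNB f a0 v hvdeep]
    rw [hrhov]
    congr 1
    unfold induce
    congr 1
    funext b
    have hmem : v + b.1 - v ∈ B := by
      rw [show v + b.1 - v = b.1 by abel]
      exact b.2
    simp only [ha0]
    rw [dif_pos hmem]
    congr 1
    apply Subtype.ext
    show v + b.1 - v = b.1
    abel
  rw [← hgv]
  exact hall0 v hvT


lemma backward_dir (hD : 1 ≤ D) (B : Finset (Fin D → ℤ)) (hB0 : (0 : Fin D → ℤ) ∈ B)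
    (hBsym : ∀ b : Fin D → ℤ, b ∈ B ↔ -b ∈ B)
    (f : (B → A) → A) (φ : A → ℝ)
    (hpos : ∀ a : A, 0 ≤ φ a) (hvac : ∃ a : A, φ a = 0)
    (hRHS : ∀ (a : (Fin D → ℤ) → A) (r : ℝ),
      StationaryAvg φ a r → StationaryAvg φ (induce B f a) r) :
    conserved B f φ := by
  classical
  obtain ⟨NB, hNB⟩ := bound_finset B
  have hvp := rule_vacuum hD B hB0 f φ hpos hvac hRHS
  have part2 : ∀ a : (Fin D → ℤ) → A, (Function.support fun x => φ (a x)).Finite →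
      (Function.support fun x => φ (induce B f a x)).Finite := by
    intro a hfin
    have hsub : (Function.support fun x => φ (induce B f a x)) ⊆
        ⋃ b ∈ (B : Set (Fin D → ℤ)), (fun y => y - b) '' (Function.support fun x => φ (a x)) := by
      intro x hx
      by_contra hnx
      apply hx
      show φ (induce B f a x) = 0
      rw [show induce B f a x = f (fun b => a (x + b.1)) from rfl]
      apply hvp
      intro b
      by_contra hb
      apply hnx
      exact Set.mem_biUnion b.2 ⟨x + b.1, hb, by simp⟩
    exact Set.Finite.subset (Set.Finite.biUnion B.finite_toSet (fun b _ => hfin.image _)) hsub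
  refine ⟨hvac, part2, ?_⟩
  intro a hfin
  set M := Finset.univ.sup' Finset.univ_nonempty φ with hM
  have hMle : ∀ b : A, φ b ≤ M := fun b => Finset.le_sup' φ (Finset.mem_univ b)
  obtain ⟨NS, hNS⟩ := bound_finset hfin.toFinset
  have hSmem : ∀ z, φ (a z) ≠ 0 → ∀ i, |z i| ≤ (NS:ℤ) := by
    intro z hz i
    exact hNS z (hfin.mem_toFinset.mpr hz) i
  have hFsupp : ∀ y, φ (induce B f a y) ≠ 0 → ∀ i, |y i| ≤ (NS:ℤ) + NB := by
    intro y hy i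
    have hex : ∃ b : B, φ (a (y + b.1)) ≠ 0 := by
      by_contra h
      push_neg at h
      apply hy
      rw [show induce B f a y = f (fun b => a (y + b.1)) from rfl]
      exact hvp _ h
    obtain ⟨b, hb⟩ := hex
    have h1 := hSmem _ hb i
    simp only [Pi.add_apply] at h1
    have h2 := hNB b.1 b.2 i
    have h1' := abs_le.mp h1
    have h2' := abs_le.mp h2
    rw [abs_le]
    omega
  set L : ℕ := 4 * NB + 2 * NS + 1 with hLdef
  have hL : 0 < L := by omega
  have hLpos : (0:ℤ) < (L:ℤ) := by exact_mod_cast hL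
  have hLcast : ((L:ℕ):ℤ) = 4 * (NB:ℤ) + 2 * (NS:ℤ) + 1 := by push_cast [hLdef]; ring
  set V0 : ℤ := 2 * (NB:ℤ) + (NS:ℤ) with hV0
  set v : Fin D → ℤ := fun _ => V0 with hv
  set a0 : (Fin D → ℤ) → A := fun z => a (z - v) with ha0
  set c : (Fin D → ℤ) → A := fun y => a0 (fun i => y i % (L:ℤ)) with hc
  set T := Finset.Icc (0 : Fin D → ℤ) (fun _ => (L:ℤ)-1) with hT
  have hTbounds : ∀ t ∈ T, ∀ i, 0 ≤ t i ∧ t i ≤ (L:ℤ)-1 := by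
    intro t ht i
    rw [hT, Finset.mem_Icc] at ht
    exact ⟨by simpa using ht.1 i, by simpa using ht.2 i⟩
  have hTmod : ∀ t ∈ T, (fun i => t i % (L:ℤ)) = t := by
    intro t ht
    funext i
    exact Int.emod_eq_of_lt (hTbounds t ht i).1 (by have := (hTbounds t ht i).2; omega)
  -- m1
  have hsubinj : Function.Injective (fun t : Fin D → ℤ => t - v) := fun s t h => by
    simpa using congrArg (fun z => z + v) h
  have hm1 : ∑ t ∈ T, φ (c t) = ∑ᶠ x, φ (a x) := by
    have h1 : ∀ t ∈ T, φ (c t) = φ (a (t - v)) := by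
      intro t ht
      simp only [hc, ha0]
      rw [hTmod t ht]
    rw [Finset.sum_congr rfl h1]
    rw [← Finset.sum_image (f := fun u => φ (a u)) (g := fun t => t - v)
      (fun s _ t _ h => hsubinj h)]
    refine (finsum_eq_finset_sum_of_support_subset _ ?_).symm
    intro z hz
    have hzb := hSmem z hz
    refine Finset.mem_coe.mpr (Finset.mem_image.mpr ⟨z + v, ?_, by simp⟩)
    rw [hT, Finset.mem_Icc]
    constructor <;> rw [Pi.le_def] <;> intro i
    · have := abs_le.mp (hzb i)
      simp only [Pi.add_apply, Pi.zero_apply, hv]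
      omega
    · have := abs_le.mp (hzb i)
      simp only [Pi.add_apply, hv]
      omega
  -- m2
  have hkey2 : ∀ t ∈ T, φ (induce B f c t) = φ (induce B f a (t - v)) := by
    intro t ht
    by_cases hdeep : ∀ i, (NB:ℤ) ≤ t i ∧ t i ≤ (L:ℤ)-1-(NB:ℤ)
    · have hdeep' : ∀ i, (NB:ℤ) ≤ t i % (L:ℤ) ∧ t i % (L:ℤ) ≤ (L:ℤ)-1-(NB:ℤ) := by
        intro i
        have hmod : t i % (L:ℤ) = t i :=
          Int.emod_eq_of_lt (hTbounds t ht i).1 (by have := (hTbounds t ht i).2; omega)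
        rw [hmod]
        exact hdeep i
      rw [hc, induce_perz L NB hL B hNB f a0 t hdeep', hTmod t ht]
      congr 1
      unfold induce
      congr 1
      funext b
      show a ((t + b.1) - v) = a ((t - v) + b.1)
      congr 1
      abel
    · push_neg at hdeep
      obtain ⟨i0, hi0⟩ := hdeep
      have hti0 := hTbounds t ht i0
      have hL0 : φ (induce B f c t) = 0 := by
        rw [show induce B f c t = f (fun b => c (t + b.1)) from rfl]
        apply hvp
        intro b
        show φ (a0 (fun i => (t + b.1) i % (L:ℤ))) = 0
        by_contra hne
        have hzb := hSmem _ hne i0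
        simp only [Pi.sub_apply, Pi.add_apply, hv] at hzb
        have hb := abs_le.mp (hNB b.1 b.2 i0)
        have hzb' := abs_le.mp hzb
        have hc1 : (0:ℤ) ≤ (t i0 + b.1 i0) % (L:ℤ) := Int.emod_nonneg _ hLpos.ne'
        have hc2 : (t i0 + b.1 i0) % (L:ℤ) < (L:ℤ) := Int.emod_lt_of_pos _ hLpos
        have hcases := emod_cases (L:ℤ) (t i0 + b.1 i0) hLpos (by omega) (by omega)
        rcases hcases with h | h | h <;> omega
      have hR0 : φ (induce B f a (t - v)) = 0 := by
        by_contra hne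
        have := abs_le.mp (hFsupp _ hne i0)
        simp only [Pi.sub_apply, hv] at this
        omega
      rw [hL0, hR0]
  have hm2 : ∑ t ∈ T, φ (induce B f c t) = ∑ᶠ x, φ (induce B f a x) := by
    rw [Finset.sum_congr rfl hkey2]
    rw [← Finset.sum_image (f := fun u => φ (induce B f a u)) (g := fun t => t - v)
      (fun s _ t _ h => hsubinj h)]
    refine (finsum_eq_finset_sum_of_support_subset _ ?_).symm
    intro z hz
    have hzb := hFsupp z hz
    refine Finset.mem_coe.mpr (Finset.mem_image.mpr ⟨z + v, ?_, by simp⟩)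
    rw [hT, Finset.mem_Icc]
    constructor <;> rw [Pi.le_def] <;> intro i
    · have := abs_le.mp (hzb i)
      simp only [Pi.add_apply, Pi.zero_apply, hv]
      omega
    · have := abs_le.mp (hzb i)
      simp only [Pi.add_apply, hv]
      omega
  -- stationarity and conclusion
  have hcper : ∀ y t, c (y + (L:ℤ) • t) = c y := fun y t => perz_periodic L a0 y t
  have hg1per : ∀ x t, (fun y => φ (c y)) (x + (L:ℤ) • t) = (fun y => φ (c y)) x := by
    intro x t
    simp only
    rw [hcper x t]
  have hstatc : StationaryAvg φ c ((∑ t ∈ T, φ (c t)) / (L:ℝ)^D) := by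
    intro I hI
    exact periodic_avg L hL (fun y => φ (c y)) M (fun x => hpos _) (fun x => hMle _) hg1per hI
  have hg2per : ∀ x t, (fun y => φ (induce B f c y)) (x + (L:ℤ) • t)
      = (fun y => φ (induce B f c y)) x := by
    intro x t
    simp only
    rw [induce_periodic L B f c hcper x t]
  have t1 := hRHS c _ hstatc (box D) (box_folner D)
  have t2 := periodic_avg L hL (fun y => φ (induce B f c y)) M (fun x => hpos _)
    (fun x => hMle _) hg2per (box_folner D)
  have huniq := tendsto_nhds_unique t1 t2
  have hLD : ((L:ℝ))^D ≠ 0 := by positivity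
  have hfin2 : ∑ t ∈ T, φ (c t) = ∑ t ∈ T, φ (induce B f c t) := by
    field_simp at huniq
    exact huniq
  rw [← hm2, ← hfin2, hm1]

end Main


theorem stmt6 {A : Type*} [Fintype A] [Nonempty A] {D : ℕ} (hD : 1 ≤ D)
    (B : Finset (Fin D → ℤ)) (hB0 : (0 : Fin D → ℤ) ∈ B)
    (hBsym : ∀ b : Fin D → ℤ, b ∈ B ↔ -b ∈ B)
    (f : (B → A) → A) (φ : A → ℝ)
    (hpos : ∀ a : A, 0 ≤ φ a) (hvac : ∃ a : A, φ a = 0) :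
    conserved B f φ ↔
      ∀ (a : (Fin D → ℤ) → A) (r : ℝ),
        StationaryAvg φ a r → StationaryAvg φ (induce B f a) r := by
  constructor
  · intro hcons a r hstat
    exact forward_dir hD B hB0 hBsym f φ hpos hvac hcons a r hstat
  · intro hRHS
    exact backward_dir hD B hB0 hBsym f φ hpos hvac hRHS
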